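/- For λ > 0 and δ ≥ 1, the quantity (1/δ)·((1 - e^{-λ/δ})/((λ/δ)(1 + e^{-λ/δ})) - e^{-λ}/2) is nonnegative and is bounded above by a constant multiple of λ/(1+λ²) uniformly for λ ∈ (0,∞). -/

import Mathlib

open Real Set

lemma tanh_upper (t : ℝ) (ht : 0 ≤ t) :
    2 * (1 - Real.exp (-t)) ≤ t * (1 + Real.exp (-t)) := by
  set g : ℝ → ℝ := fun x => x + x * Real.exp (-x) - 2 + 2 * Real.exp (-x) with hg
  have hd : ∀ x : ℝ, HasDerivAt g (1 - (1 + x) * Real.exp (-x)) x := by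
    intro x
    have h1 : HasDerivAt (fun x : ℝ => -x) (-1) x := (hasDerivAt_id x).neg
    have he : HasDerivAt (fun x : ℝ => Real.exp (-x)) (-Real.exp (-x)) x := by
      simpa using h1.exp
    have h2 : HasDerivAt (fun x : ℝ => x * Real.exp (-x))
        (1 * Real.exp (-x) + x * (-Real.exp (-x))) x := (hasDerivAt_id x).mul he
    have h3 := (((hasDerivAt_id x).add h2).sub_const 2).add (he.const_mul 2)
    have h4 : HasDerivAt g (1 + (1 * Real.exp (-x) + x * -Real.exp (-x)) + 2 * -Real.exp (-x)) x := h3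
    convert h4 using 1
    ring
  have hmono : MonotoneOn g (Ici (0:ℝ)) := by
    apply monotoneOn_of_deriv_nonneg (convex_Ici 0)
    · exact fun x _ => ((hd x).differentiableAt).continuousAt.continuousWithinAt
    · exact fun x _ => ((hd x).differentiableAt).differentiableWithinAt
    · intro x hx
      rw [(hd x).deriv]
      have hx0 : (0:ℝ) ≤ x := le_of_lt (by simpa using hx)
      have h1 : (1 + x) * Real.exp (-x) ≤ 1 := by
        rw [Real.exp_neg, mul_inv_le_iff₀ (Real.exp_pos x)]
        have := Real.add_one_le_exp x
        linarith
      linarith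
  have h0 : g 0 ≤ g t := hmono (by simp) (by simpa using ht) ht
  simp only [hg] at h0
  simp at h0
  nlinarith [h0]

lemma lower_aux (t : ℝ) (ht : 0 < t) :
    t * Real.exp (-t) * (1 + Real.exp (-t)) ≤ 2 * (1 - Real.exp (-t)) := by
  have h1 : 1 + t ≤ Real.exp t := by have := Real.add_one_le_exp t; linarith
  have hy : Real.exp (-t) * Real.exp t = 1 := by
    rw [← Real.exp_add]; simp
  have hy0 : 0 < Real.exp (-t) := Real.exp_pos _
  have hy1 : Real.exp (-t) ≤ 1 := Real.exp_le_one_iff.mpr (by linarith)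
  nlinarith [mul_pos ht hy0, mul_le_of_le_one_right (mul_pos ht hy0).le hy1,
    mul_le_mul_of_nonneg_left h1 hy0.le]

theorem best_approx_error_bound (delta : ℝ) (hdelta : 1 ≤ delta) :
    (∀ lam : ℝ, 0 < lam →
      0 ≤ (1 / delta) * ((1 - Real.exp (-lam / delta)) /
          ((lam / delta) * (1 + Real.exp (-lam / delta))) - Real.exp (-lam) / 2)) ∧
    ∃ C : ℝ, 0 < C ∧ ∀ lam : ℝ, 0 < lam →
      (1 / delta) * ((1 - Real.exp (-lam / delta)) /
          ((lam / delta) * (1 + Real.exp (-lam / delta))) - Real.exp (-lam) / 2)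
        ≤ C * (lam / (1 + lam ^ 2)) := by
  have hd0 : (0:ℝ) < delta := lt_of_lt_of_le one_pos hdelta
  constructor
  · intro lam hlam
    have ht : 0 < lam / delta := div_pos hlam hd0
    have hneg : -lam / delta = -(lam / delta) := by ring
    set t := lam / delta with htdef
    have hyp : 0 < 1 + Real.exp (-t) := by positivity
    have htlam : t ≤ lam := by
      rw [htdef, div_le_iff₀ hd0]; nlinarith
    have hz : Real.exp (-lam) ≤ Real.exp (-t) := Real.exp_le_exp.mpr (by linarith)
    have key := lower_aux t ht
    have hfrac : Real.exp (-t) / 2 ≤ (1 - Real.exp (-t)) / (t * (1 + Real.exp (-t))) := by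
      rw [div_le_div_iff₀ two_pos (by positivity)]
      nlinarith
    rw [hneg]
    have : 0 ≤ (1 - Real.exp (-t)) / (t * (1 + Real.exp (-t))) - Real.exp (-lam) / 2 := by
      linarith
    positivity
  · refine ⟨2, two_pos, fun lam hlam => ?_⟩
    have ht : 0 < lam / delta := div_pos hlam hd0
    have hneg : -lam / delta = -(lam / delta) := by ring
    rw [hneg]
    set t := lam / delta with htdef
    have hy0 : 0 < Real.exp (-t) := Real.exp_pos _
    have hyp : 0 < 1 + Real.exp (-t) := by positivity
    have hz0 : 0 < Real.exp (-lam) := Real.exp_pos _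
    have hdt : delta * t = lam := by rw [htdef]; field_simp
    have hdinv : 1 / delta ≤ 1 := by
      rw [div_le_one hd0]; exact hdelta
    have hdinv0 : 0 < 1 / delta := by positivity
    rcases le_total lam 1 with hl | hl
    · -- small lam: F ≤ 1/2, exp(-lam) ≥ 1 - lam
      have hF : (1 - Real.exp (-t)) / (t * (1 + Real.exp (-t))) ≤ 1 / 2 := by
        rw [div_le_div_iff₀ (by positivity) two_pos]
        have := tanh_upper t ht.le
        nlinarith
      have hzl : 1 - lam ≤ Real.exp (-lam) := by
        have := Real.add_one_le_exp (-lam); linarith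
      have hM : (1 - Real.exp (-t)) / (t * (1 + Real.exp (-t))) - Real.exp (-lam) / 2
          ≤ lam / 2 := by linarith
      have hE : (1 / delta) * ((1 - Real.exp (-t)) / (t * (1 + Real.exp (-t))) -
          Real.exp (-lam) / 2) ≤ lam / 2 := by
        calc _ ≤ (1 / delta) * (lam / 2) := by
              apply mul_le_mul_of_nonneg_left hM hdinv0.le
          _ ≤ 1 * (lam / 2) := by
              apply mul_le_mul_of_nonneg_right hdinv (by positivity)
          _ = lam / 2 := one_mul _
      have h12 : (0:ℝ) < 1 + lam ^ 2 := by positivity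
      have : lam / 2 ≤ 2 * (lam / (1 + lam ^ 2)) := by
        rw [← mul_div_assoc, div_le_div_iff₀ two_pos h12]
        nlinarith
      linarith
    · -- large lam: F ≤ 1/t
      have hF : (1 - Real.exp (-t)) / (t * (1 + Real.exp (-t))) ≤ 1 / t := by
        rw [div_le_div_iff₀ (by positivity) ht]
        nlinarith
      have hM : (1 - Real.exp (-t)) / (t * (1 + Real.exp (-t))) - Real.exp (-lam) / 2
          ≤ 1 / t := by linarith
      have hE : (1 / delta) * ((1 - Real.exp (-t)) / (t * (1 + Real.exp (-t))) -
          Real.exp (-lam) / 2) ≤ 1 / lam := by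
        calc _ ≤ (1 / delta) * (1 / t) := by
              apply mul_le_mul_of_nonneg_left hM hdinv0.le
          _ = 1 / lam := by
              rw [div_mul_div_comm, one_mul, hdt]
      have h12 : (0:ℝ) < 1 + lam ^ 2 := by positivity
      have : 1 / lam ≤ 2 * (lam / (1 + lam ^ 2)) := by
        rw [← mul_div_assoc, div_le_div_iff₀ hlam h12]
        nlinarith
      linarith
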